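/- If P is a principal divisor on G and Q is a principal divisor on H, then β(P,Q) is a principal divisor on the triangulated product Δ. -/
import Mathlib


open scoped Classical
open Finset

section TriangulatedProduct

variable {VG VH : Type*}

/-- The column of the Laplacian matrix of `G` indexed by the vertex `w`:
its entry at `v` is `-deg v` if `v = w`, `1` if `v` is adjacent to `w`, and `0` otherwise. -/
noncomputable def lapCol (G : SimpleGraph VG) [Fintype VG] (w v : VG) : ℤ :=
  if v = w then -(((Finset.univ.filter (fun u => G.Adj v u)).card : ℤ))
  else if G.Adj v w then 1 else 0

/-- A divisor on a finite graph is principal if it lies in the ℤ-span of the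
columns of the Laplacian matrix of the graph. -/
def GraphPrincipal (G : SimpleGraph VG) [Fintype VG] (D : VG → ℤ) : Prop :=
  ∃ f : VG → ℤ, ∀ v, D v = ∑ w, f w * lapCol G w v

/-- A triangulated product of the graphs `G` and `H`: for each square
(an edge `aa'` of `G` together with an edge `bb'` of `H`) exactly one of the two
possible diagonals `{(a,b),(a',b')}`, `{(a,b'),(a',b)}` is chosen.  The structure
records the resulting symmetric "diagonal edge" relation. -/
structure TriProd (G : SimpleGraph VG) (H : SimpleGraph VH) where
  diag : VG × VH → VG × VH → Prop
  diag_symm : ∀ u v, diag u v → diag v u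
  diag_adj : ∀ a a' b b', diag (a, b) (a', b') → G.Adj a a' ∧ H.Adj b b'
  diag_choice : ∀ a a' b b', G.Adj a a' → H.Adj b b' →
    (diag (a, b) (a', b') ∧ ¬ diag (a, b') (a', b)) ∨
    (¬ diag (a, b) (a', b') ∧ diag (a, b') (a', b))

namespace TriProd

variable {G : SimpleGraph VG} {H : SimpleGraph VH}

/-- `u` and `v` form an edge of the triangulated product: a horizontal edge,
a vertical edge, or a diagonal edge. -/
def Adj (T : TriProd G H) (u v : VG × VH) : Prop :=
  (u.2 = v.2 ∧ G.Adj u.1 v.1) ∨ (u.1 = v.1 ∧ H.Adj u.2 v.2) ∨ T.diag u v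

/-- `{u, v, w}` is a triangle (2-face) of the triangulated product. -/
def IsFace (T : TriProd G H) (u v w : VG × VH) : Prop :=
  ∃ a a' b b', T.diag (a, b) (a', b') ∧
    ({u, v, w} : Finset (VG × VH)) = {(a, b), (a', b'), (a', b)}

/-- `{u, v, w}` is a triangle of the triangulated product whose diagonal edge
does not contain the vertex `x`. -/
def IsFaceAvoiding (T : TriProd G H) (u v w x : VG × VH) : Prop :=
  ∃ a a' b b', T.diag (a, b) (a', b') ∧
    ({u, v, w} : Finset (VG × VH)) = {(a, b), (a', b'), (a', b)} ∧
    x ≠ (a, b) ∧ x ≠ (a', b')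

variable [Fintype VG] [Fintype VH]

/-- The structure constant `α(e, x)` for the edge `e = {u, v}` of the
triangulated product and the vertex `x`. -/
noncomputable def alpha (T : TriProd G H) (u v x : VG × VH) : ℤ :=
  if x = u ∨ x = v then
    (if T.diag u v then 1
     else ((Finset.univ.filter (fun w => T.IsFaceAvoiding u v w x)).card : ℤ))
  else 0

/-- The divisor of the function `φ`, evaluated at the edge `{u, v}` of the
triangulated product: the sum of `φ` over the third vertices of the triangles
containing `{u, v}`, minus `α({u,v},u) φ(u) + α({u,v},v) φ(v)`. -/
noncomputable def Div (T : TriProd G H) (φ : VG × VH → ℤ) (u v : VG × VH) : ℤ :=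
  (∑ w ∈ Finset.univ.filter (fun w => T.IsFace u v w), φ w)
    - (T.alpha u v u * φ u + T.alpha u v v * φ v)

/-- A divisor on the triangulated product (a function on edges, encoded as a
function on ordered pairs of vertices) is principal if it agrees with `Div φ`
on every edge, for some `φ`. -/
def Principal (T : TriProd G H) (D : VG × VH → VG × VH → ℤ) : Prop :=
  ∃ φ : VG × VH → ℤ, ∀ u v, T.Adj u v → D u v = T.Div φ u v

/-- A divisor on the triangulated product is Cartier if near every vertex `x`
it agrees with a principal divisor on all edges containing `x`. -/
def Cartier (T : TriProd G H) (D : VG × VH → VG × VH → ℤ) : Prop :=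
  ∀ x : VG × VH, ∃ φ : VG × VH → ℤ,
    ∀ u v, T.Adj u v → (x = u ∨ x = v) → D u v = T.Div φ u v

/-- A divisor is ℚ-Cartier if some nonzero integer multiple of it is Cartier. -/
def QCartier (T : TriProd G H) (D : VG × VH → VG × VH → ℤ) : Prop :=
  ∃ m : ℤ, m ≠ 0 ∧ T.Cartier (fun u v => m * D u v)

/-- The balancing conditions for a divisor `D` on the triangulated product. -/
def Balanced (T : TriProd G H) (D : VG × VH → VG × VH → ℤ) : Prop :=
  ∀ a : VG, ∀ b : VH,
    (∀ x x' : VG, G.Adj a x → G.Adj a x' →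
      (∑ c ∈ Finset.univ.filter (fun c : VH => T.Adj (a, b) (x, c)), D (a, b) (x, c)) =
      (∑ c ∈ Finset.univ.filter (fun c : VH => T.Adj (a, b) (x', c)), D (a, b) (x', c))) ∧
    (∀ y y' : VH, H.Adj b y → H.Adj b y' →
      (∑ c ∈ Finset.univ.filter (fun c : VG => T.Adj (a, b) (c, y)), D (a, b) (c, y)) =
      (∑ c ∈ Finset.univ.filter (fun c : VG => T.Adj (a, b) (c, y')), D (a, b) (c, y')))

end TriProd

/-- The map `β` sending a pair of divisors on `G` and `H` to a divisor on the
triangulated product: `C(a)` on vertical edges `{(a,b),(a,b')}`, `D(b)` on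
horizontal edges `{(a,b),(a',b)}`, and `0` on diagonal edges. -/
noncomputable def beta (C : VG → ℤ) (D : VH → ℤ) (u v : VG × VH) : ℤ :=
  if u.1 = v.1 then C u.1 else if u.2 = v.2 then D u.2 else 0

end TriangulatedProduct
section Aux

open Finset
variable {VG VH : Type*} {G : SimpleGraph VG} {H : SimpleGraph VH}

namespace TriProd

lemma diag_neG (T : TriProd G H) {a a' : VG} {b b' : VH}
    (h : T.diag (a,b) (a',b')) : a ≠ a' := (T.diag_adj _ _ _ _ h).1.ne

lemma diag_neH (T : TriProd G H) {a a' : VG} {b b' : VH}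
    (h : T.diag (a,b) (a',b')) : b ≠ b' := (T.diag_adj _ _ _ _ h).2.ne

lemma isFace_horiz (T : TriProd G H) {a a' : VG} (b : VH) (hGa : G.Adj a a')
    (w : VG × VH) :
    T.IsFace (a,b) (a',b) w ↔
      (∃ y, T.diag (a,b) (a',y) ∧ w = (a',y)) ∨
      (∃ y, T.diag (a',b) (a,y) ∧ w = (a,y)) := by
  have ha : a ≠ a' := hGa.ne
  constructor
  · rintro ⟨x, x', y, y', hd, hset⟩
    have hx : x ≠ x' := T.diag_neG hd
    have hy : y ≠ y' := T.diag_neH hd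
    have hu : (a = x ∧ b = y) ∨ (a = x' ∧ b = y') ∨ (a = x' ∧ b = y) := by
      have : (a,b) ∈ ({(x,y),(x',y'),(x',y)} : Finset (VG×VH)) := by
        rw [← hset]; simp
      simpa [Prod.ext_iff] using this
    have hv : (a' = x ∧ b = y) ∨ (a' = x' ∧ b = y') ∨ (a' = x' ∧ b = y) := by
      have : (a',b) ∈ ({(x,y),(x',y'),(x',y)} : Finset (VG×VH)) := by
        rw [← hset]; simp
      simpa [Prod.ext_iff] using this
    have hw2 : (x' = a ∧ y' = b) ∨ (x' = a' ∧ y' = b) ∨ (x',y') = w := by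
      have : (x',y') ∈ ({(a,b),(a',b),w} : Finset (VG×VH)) := by
        rw [hset]; simp
      simpa [Prod.ext_iff] using this
    clear hset
    rcases hu with ⟨h1,h2⟩|⟨h1,h2⟩|⟨h1,h2⟩ <;>
      rcases hv with ⟨h3,h4⟩|⟨h3,h4⟩|⟨h3,h4⟩ <;>
      rcases hw2 with ⟨h5,h6⟩|⟨h5,h6⟩|h5 <;>
      subst_vars <;>
      first
        | exact Or.inl ⟨_, hd, rfl⟩
        | exact Or.inr ⟨_, hd, rfl⟩
        | simp_all
  · rintro (⟨y, hd, rfl⟩ | ⟨y, hd, rfl⟩)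
    · exact ⟨a, a', b, y, hd, by ext z; simp; try tauto⟩
    · exact ⟨a', a, b, y, hd, by ext z; simp; try tauto⟩

lemma isFaceAvoiding_horiz_left (T : TriProd G H) {a a' : VG} (b : VH)
    (hGa : G.Adj a a') (w : VG × VH) :
    T.IsFaceAvoiding (a,b) (a',b) w (a,b) ↔
      (∃ y, T.diag (a',b) (a,y) ∧ w = (a,y)) := by
  have ha : a ≠ a' := hGa.ne
  constructor
  · rintro ⟨x, x', y, y', hd, hset, hne1, hne2⟩
    have hx : x ≠ x' := T.diag_neG hd
    have hy : y ≠ y' := T.diag_neH hd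
    have hu : (a = x ∧ b = y) ∨ (a = x' ∧ b = y') ∨ (a = x' ∧ b = y) := by
      have : (a,b) ∈ ({(x,y),(x',y'),(x',y)} : Finset (VG×VH)) := by
        rw [← hset]; simp
      simpa [Prod.ext_iff] using this
    have hv : (a' = x ∧ b = y) ∨ (a' = x' ∧ b = y') ∨ (a' = x' ∧ b = y) := by
      have : (a',b) ∈ ({(x,y),(x',y'),(x',y)} : Finset (VG×VH)) := by
        rw [← hset]; simp
      simpa [Prod.ext_iff] using this
    have hw2 : (x' = a ∧ y' = b) ∨ (x' = a' ∧ y' = b) ∨ (x',y') = w := by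
      have : (x',y') ∈ ({(a,b),(a',b),w} : Finset (VG×VH)) := by
        rw [hset]; simp
      simpa [Prod.ext_iff] using this
    clear hset
    rcases hu with ⟨h1,h2⟩|⟨h1,h2⟩|⟨h1,h2⟩ <;>
      rcases hv with ⟨h3,h4⟩|⟨h3,h4⟩|⟨h3,h4⟩ <;>
      rcases hw2 with ⟨h5,h6⟩|⟨h5,h6⟩|h5 <;>
      subst_vars <;>
      first
        | exact ⟨_, hd, rfl⟩
        | simp_all
  · rintro ⟨y, hd, rfl⟩
    refine ⟨a', a, b, y, hd, by ext z; simp; try tauto, ?_, ?_⟩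
    · exact fun h => ha (congrArg Prod.fst h)
    · exact fun h => T.diag_neH hd (congrArg Prod.snd h)

lemma isFaceAvoiding_horiz_right (T : TriProd G H) {a a' : VG} (b : VH)
    (hGa : G.Adj a a') (w : VG × VH) :
    T.IsFaceAvoiding (a,b) (a',b) w (a',b) ↔
      (∃ y, T.diag (a,b) (a',y) ∧ w = (a',y)) := by
  have ha : a ≠ a' := hGa.ne
  constructor
  · rintro ⟨x, x', y, y', hd, hset, hne1, hne2⟩
    have hx : x ≠ x' := T.diag_neG hd
    have hy : y ≠ y' := T.diag_neH hd
    have hu : (a = x ∧ b = y) ∨ (a = x' ∧ b = y') ∨ (a = x' ∧ b = y) := by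
      have : (a,b) ∈ ({(x,y),(x',y'),(x',y)} : Finset (VG×VH)) := by
        rw [← hset]; simp
      simpa [Prod.ext_iff] using this
    have hv : (a' = x ∧ b = y) ∨ (a' = x' ∧ b = y') ∨ (a' = x' ∧ b = y) := by
      have : (a',b) ∈ ({(x,y),(x',y'),(x',y)} : Finset (VG×VH)) := by
        rw [← hset]; simp
      simpa [Prod.ext_iff] using this
    have hw2 : (x' = a ∧ y' = b) ∨ (x' = a' ∧ y' = b) ∨ (x',y') = w := by
      have : (x',y') ∈ ({(a,b),(a',b),w} : Finset (VG×VH)) := by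
        rw [hset]; simp
      simpa [Prod.ext_iff] using this
    clear hset
    rcases hu with ⟨h1,h2⟩|⟨h1,h2⟩|⟨h1,h2⟩ <;>
      rcases hv with ⟨h3,h4⟩|⟨h3,h4⟩|⟨h3,h4⟩ <;>
      rcases hw2 with ⟨h5,h6⟩|⟨h5,h6⟩|h5 <;>
      subst_vars <;>
      first
        | exact ⟨_, hd, rfl⟩
        | simp_all
  · rintro ⟨y, hd, rfl⟩
    refine ⟨a, a', b, y, hd, by ext z; simp; try tauto, ?_, ?_⟩
    · exact fun h => ha (congrArg Prod.fst h).symm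
    · exact fun h => T.diag_neH hd (congrArg Prod.snd h)

end TriProd
end Aux
section Aux2
open Finset
variable {VG VH : Type*} {G : SimpleGraph VG} {H : SimpleGraph VH}
namespace TriProd

lemma isFace_vert (T : TriProd G H) (a : VG) {b b' : VH} (hHa : H.Adj b b')
    (w : VG × VH) :
    T.IsFace (a,b) (a,b') w ↔
      (∃ x, T.diag (x,b) (a,b') ∧ w = (x,b)) ∨
      (∃ x, T.diag (x,b') (a,b) ∧ w = (x,b')) := by
  have hb : b ≠ b' := hHa.ne
  constructor
  · rintro ⟨x, x', y, y', hd, hset⟩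
    have hx : x ≠ x' := T.diag_neG hd
    have hy : y ≠ y' := T.diag_neH hd
    have hu : (a = x ∧ b = y) ∨ (a = x' ∧ b = y') ∨ (a = x' ∧ b = y) := by
      have : (a,b) ∈ ({(x,y),(x',y'),(x',y)} : Finset (VG×VH)) := by
        rw [← hset]; simp
      simpa [Prod.ext_iff] using this
    have hv : (a = x ∧ b' = y) ∨ (a = x' ∧ b' = y') ∨ (a = x' ∧ b' = y) := by
      have : (a,b') ∈ ({(x,y),(x',y'),(x',y)} : Finset (VG×VH)) := by
        rw [← hset]; simp
      simpa [Prod.ext_iff] using this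
    have hw1 : (x = a ∧ y = b) ∨ (x = a ∧ y = b') ∨ (x,y) = w := by
      have : (x,y) ∈ ({(a,b),(a,b'),w} : Finset (VG×VH)) := by
        rw [hset]; simp
      simpa [Prod.ext_iff] using this
    clear hset
    rcases hu with ⟨h1,h2⟩|⟨h1,h2⟩|⟨h1,h2⟩ <;>
      rcases hv with ⟨h3,h4⟩|⟨h3,h4⟩|⟨h3,h4⟩ <;>
      rcases hw1 with ⟨h5,h6⟩|⟨h5,h6⟩|h5 <;>
      subst_vars <;>
      first
        | exact Or.inl ⟨_, hd, rfl⟩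
        | exact Or.inr ⟨_, hd, rfl⟩
        | simp_all
  · rintro (⟨x, hd, rfl⟩ | ⟨x, hd, rfl⟩)
    · exact ⟨x, a, b, b', hd, by ext z; simp; try tauto⟩
    · exact ⟨x, a, b', b, hd, by ext z; simp; try tauto⟩

lemma isFaceAvoiding_vert_left (T : TriProd G H) (a : VG) {b b' : VH}
    (hHa : H.Adj b b') (w : VG × VH) :
    T.IsFaceAvoiding (a,b) (a,b') w (a,b) ↔
      (∃ x, T.diag (x,b) (a,b') ∧ w = (x,b)) := by
  have hb : b ≠ b' := hHa.ne
  constructor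
  · rintro ⟨x, x', y, y', hd, hset, hne1, hne2⟩
    have hx : x ≠ x' := T.diag_neG hd
    have hy : y ≠ y' := T.diag_neH hd
    have hu : (a = x ∧ b = y) ∨ (a = x' ∧ b = y') ∨ (a = x' ∧ b = y) := by
      have : (a,b) ∈ ({(x,y),(x',y'),(x',y)} : Finset (VG×VH)) := by
        rw [← hset]; simp
      simpa [Prod.ext_iff] using this
    have hv : (a = x ∧ b' = y) ∨ (a = x' ∧ b' = y') ∨ (a = x' ∧ b' = y) := by
      have : (a,b') ∈ ({(x,y),(x',y'),(x',y)} : Finset (VG×VH)) := by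
        rw [← hset]; simp
      simpa [Prod.ext_iff] using this
    have hw1 : (x = a ∧ y = b) ∨ (x = a ∧ y = b') ∨ (x,y) = w := by
      have : (x,y) ∈ ({(a,b),(a,b'),w} : Finset (VG×VH)) := by
        rw [hset]; simp
      simpa [Prod.ext_iff] using this
    clear hset
    rcases hu with ⟨h1,h2⟩|⟨h1,h2⟩|⟨h1,h2⟩ <;>
      rcases hv with ⟨h3,h4⟩|⟨h3,h4⟩|⟨h3,h4⟩ <;>
      rcases hw1 with ⟨h5,h6⟩|⟨h5,h6⟩|h5 <;>
      subst_vars <;>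
      first
        | exact ⟨_, hd, rfl⟩
        | simp_all
  · rintro ⟨x, hd, rfl⟩
    refine ⟨x, a, b, b', hd, by ext z; simp; try tauto, ?_, ?_⟩
    · exact fun h => (T.diag_neG hd) (congrArg Prod.fst h).symm
    · exact fun h => hb (congrArg Prod.snd h)

lemma isFaceAvoiding_vert_right (T : TriProd G H) (a : VG) {b b' : VH}
    (hHa : H.Adj b b') (w : VG × VH) :
    T.IsFaceAvoiding (a,b) (a,b') w (a,b') ↔
      (∃ x, T.diag (x,b') (a,b) ∧ w = (x,b')) := by
  have hb : b ≠ b' := hHa.ne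
  constructor
  · rintro ⟨x, x', y, y', hd, hset, hne1, hne2⟩
    have hx : x ≠ x' := T.diag_neG hd
    have hy : y ≠ y' := T.diag_neH hd
    have hu : (a = x ∧ b = y) ∨ (a = x' ∧ b = y') ∨ (a = x' ∧ b = y) := by
      have : (a,b) ∈ ({(x,y),(x',y'),(x',y)} : Finset (VG×VH)) := by
        rw [← hset]; simp
      simpa [Prod.ext_iff] using this
    have hv : (a = x ∧ b' = y) ∨ (a = x' ∧ b' = y') ∨ (a = x' ∧ b' = y) := by
      have : (a,b') ∈ ({(x,y),(x',y'),(x',y)} : Finset (VG×VH)) := by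
        rw [← hset]; simp
      simpa [Prod.ext_iff] using this
    have hw1 : (x = a ∧ y = b) ∨ (x = a ∧ y = b') ∨ (x,y) = w := by
      have : (x,y) ∈ ({(a,b),(a,b'),w} : Finset (VG×VH)) := by
        rw [hset]; simp
      simpa [Prod.ext_iff] using this
    clear hset
    rcases hu with ⟨h1,h2⟩|⟨h1,h2⟩|⟨h1,h2⟩ <;>
      rcases hv with ⟨h3,h4⟩|⟨h3,h4⟩|⟨h3,h4⟩ <;>
      rcases hw1 with ⟨h5,h6⟩|⟨h5,h6⟩|h5 <;>
      subst_vars <;>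
      first
        | exact ⟨_, hd, rfl⟩
        | simp_all
  · rintro ⟨x, hd, rfl⟩
    refine ⟨x, a, b', b, hd, by ext z; simp; try tauto, ?_, ?_⟩
    · exact fun h => (T.diag_neG hd) (congrArg Prod.fst h).symm
    · exact fun h => hb (congrArg Prod.snd h).symm

lemma isFace_diag (T : TriProd G H) {a a' : VG} {b b' : VH}
    (hd0 : T.diag (a,b) (a',b')) (w : VG × VH) :
    T.IsFace (a,b) (a',b') w ↔ w = (a',b) ∨ w = (a,b') := by
  have ha : a ≠ a' := T.diag_neG hd0
  have hb : b ≠ b' := T.diag_neH hd0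
  constructor
  · rintro ⟨x, x', y, y', hd, hset⟩
    have hx : x ≠ x' := T.diag_neG hd
    have hy : y ≠ y' := T.diag_neH hd
    have hu : (a = x ∧ b = y) ∨ (a = x' ∧ b = y') ∨ (a = x' ∧ b = y) := by
      have : (a,b) ∈ ({(x,y),(x',y'),(x',y)} : Finset (VG×VH)) := by
        rw [← hset]; simp
      simpa [Prod.ext_iff] using this
    have hv : (a' = x ∧ b' = y) ∨ (a' = x' ∧ b' = y') ∨ (a' = x' ∧ b' = y) := by
      have : (a',b') ∈ ({(x,y),(x',y'),(x',y)} : Finset (VG×VH)) := by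
        rw [← hset]; simp
      simpa [Prod.ext_iff] using this
    have hw3 : (x' = a ∧ y = b) ∨ (x' = a' ∧ y = b') ∨ (x',y) = w := by
      have : (x',y) ∈ ({(a,b),(a',b'),w} : Finset (VG×VH)) := by
        rw [hset]; simp
      simpa [Prod.ext_iff] using this
    clear hset
    rcases hu with ⟨h1,h2⟩|⟨h1,h2⟩|⟨h1,h2⟩ <;>
      rcases hv with ⟨h3,h4⟩|⟨h3,h4⟩|⟨h3,h4⟩ <;>
      rcases hw3 with ⟨h5,h6⟩|⟨h5,h6⟩|h5 <;>
      subst_vars <;>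
      first
        | exact Or.inl rfl
        | exact Or.inr rfl
        | simp_all
  · rintro (rfl | rfl)
    · exact ⟨a, a', b, b', hd0, by ext z; simp; try tauto⟩
    · exact ⟨a', a, b', b, T.diag_symm _ _ hd0, by ext z; simp; try tauto⟩

end TriProd
end Aux2
section Aux3
open Finset
variable {VG VH : Type*} {G : SimpleGraph VG} {H : SimpleGraph VH}
  [Fintype VG] [Fintype VH]
namespace TriProd

lemma div_horiz (T : TriProd G H) (f : VG → ℤ) (g : VH → ℤ) {a a' : VG}
    (b : VH) (hGa : G.Adj a a') :
    T.Div (fun p => f p.1 + g p.2) (a,b) (a',b)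
      = (∑ y ∈ univ.filter (fun y => H.Adj b y), g y)
        - ((univ.filter (fun y => H.Adj b y)).card : ℤ) * g b := by
  have ha : a ≠ a' := hGa.ne
  have hnd : ¬ T.diag (a,b) (a',b) := fun h => (T.diag_neH h) rfl
  set N1 := univ.filter (fun y => T.diag (a,b) (a',y)) with hN1
  set N2 := univ.filter (fun y => T.diag (a',b) (a,y)) with hN2
  have hmem1 : ∀ y, y ∈ N1 ↔ T.diag (a,b) (a',y) := by
    intro y; simp [hN1]
  have hmem2 : ∀ y, y ∈ N2 ↔ T.diag (a',b) (a,y) := by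
    intro y; simp [hN2]
  have hunion : N1 ∪ N2 = univ.filter (fun y => H.Adj b y) := by
    ext y
    simp only [mem_union, hmem1 y, hmem2 y, mem_filter, mem_univ, true_and]
    constructor
    · rintro (h | h)
      · exact (T.diag_adj _ _ _ _ h).2
      · exact (T.diag_adj _ _ _ _ h).2
    · intro h
      rcases T.diag_choice a a' b y hGa h with ⟨h1, _⟩ | ⟨_, h2⟩
      · exact Or.inl h1
      · exact Or.inr (T.diag_symm _ _ h2)
  have hdisj : Disjoint N1 N2 := by
    rw [Finset.disjoint_left]
    intro y hy1 hy2
    rw [hmem1] at hy1; rw [hmem2] at hy2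
    rcases T.diag_choice a a' b y hGa (T.diag_adj _ _ _ _ hy1).2 with
      ⟨_, hn⟩ | ⟨hn, _⟩
    · exact hn (T.diag_symm _ _ hy2)
    · exact hn hy1
  have hinj1 : ∀ y ∈ N1, ∀ z ∈ N1, ((a',y) : VG × VH) = (a',z) → y = z :=
    fun y _ z _ h => congrArg Prod.snd h
  have hinj2 : ∀ y ∈ N2, ∀ z ∈ N2, ((a,y) : VG × VH) = (a,z) → y = z :=
    fun y _ z _ h => congrArg Prod.snd h
  have hface : univ.filter (fun w => T.IsFace (a,b) (a',b) w)
      = N1.image (fun y => ((a',y) : VG × VH))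
        ∪ N2.image (fun y => ((a,y) : VG × VH)) := by
    ext w
    simp only [mem_filter, mem_univ, true_and, mem_union, mem_image,
      T.isFace_horiz b hGa, hmem1, hmem2]
    constructor
    · rintro (⟨y, hd, rfl⟩ | ⟨y, hd, rfl⟩)
      · exact Or.inl ⟨y, hd, rfl⟩
      · exact Or.inr ⟨y, hd, rfl⟩
    · rintro (⟨y, hd, rfl⟩ | ⟨y, hd, rfl⟩)
      · exact Or.inl ⟨y, hd, rfl⟩
      · exact Or.inr ⟨y, hd, rfl⟩
  have himgdisj : Disjoint (N1.image (fun y => ((a',y) : VG × VH)))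
      (N2.image (fun y => ((a,y) : VG × VH))) := by
    rw [Finset.disjoint_left]
    rintro p hp1 hp2
    rw [mem_image] at hp1 hp2
    obtain ⟨y, _, rfl⟩ := hp1
    obtain ⟨z, _, hz⟩ := hp2
    exact ha (congrArg Prod.fst hz)
  have havoid1 : univ.filter (fun w => T.IsFaceAvoiding (a,b) (a',b) w (a,b))
      = N2.image (fun y => ((a,y) : VG × VH)) := by
    ext w
    simp only [mem_filter, mem_univ, true_and, mem_image,
      T.isFaceAvoiding_horiz_left b hGa, hmem2]
    constructor
    · rintro ⟨y, hd, rfl⟩; exact ⟨y, hd, rfl⟩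
    · rintro ⟨y, hd, rfl⟩; exact ⟨y, hd, rfl⟩
  have havoid2 : univ.filter (fun w => T.IsFaceAvoiding (a,b) (a',b) w (a',b))
      = N1.image (fun y => ((a',y) : VG × VH)) := by
    ext w
    simp only [mem_filter, mem_univ, true_and, mem_image,
      T.isFaceAvoiding_horiz_right b hGa, hmem1]
    constructor
    · rintro ⟨y, hd, rfl⟩; exact ⟨y, hd, rfl⟩
    · rintro ⟨y, hd, rfl⟩; exact ⟨y, hd, rfl⟩
  have halpha1 : T.alpha (a,b) (a',b) (a,b) = (N2.card : ℤ) := by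
    rw [TriProd.alpha, if_pos (Or.inl rfl), if_neg hnd, havoid1,
      Finset.card_image_of_injOn (fun y _ z _ h => congrArg Prod.snd h)]
  have halpha2 : T.alpha (a,b) (a',b) (a',b) = (N1.card : ℤ) := by
    rw [TriProd.alpha, if_pos (Or.inr rfl), if_neg hnd, havoid2,
      Finset.card_image_of_injOn (fun y _ z _ h => congrArg Prod.snd h)]
  have hsum : (∑ y ∈ N1, g y) + (∑ y ∈ N2, g y)
      = ∑ y ∈ univ.filter (fun y => H.Adj b y), g y := by
    rw [← Finset.sum_union hdisj, hunion]
  have hcard : (N1.card : ℤ) + (N2.card : ℤ)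
      = ((univ.filter (fun y => H.Adj b y)).card : ℤ) := by
    rw [← Nat.cast_add, ← Finset.card_union_of_disjoint hdisj, hunion]
  rw [TriProd.Div, hface, Finset.sum_union himgdisj,
    Finset.sum_image hinj1, Finset.sum_image hinj2, halpha1, halpha2]
  simp only [Finset.sum_add_distrib, Finset.sum_const, nsmul_eq_mul]
  rw [← hsum, ← hcard]
  ring

lemma div_vert (T : TriProd G H) (f : VG → ℤ) (g : VH → ℤ) (a : VG)
    {b b' : VH} (hHa : H.Adj b b') :
    T.Div (fun p => f p.1 + g p.2) (a,b) (a,b')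
      = (∑ x ∈ univ.filter (fun x => G.Adj a x), f x)
        - ((univ.filter (fun x => G.Adj a x)).card : ℤ) * f a := by
  have hb : b ≠ b' := hHa.ne
  have hnd : ¬ T.diag (a,b) (a,b') := fun h => (T.diag_neG h) rfl
  set N1 := univ.filter (fun x => T.diag (x,b) (a,b')) with hN1
  set N2 := univ.filter (fun x => T.diag (x,b') (a,b)) with hN2
  have hmem1 : ∀ x, x ∈ N1 ↔ T.diag (x,b) (a,b') := by
    intro x; simp [hN1]
  have hmem2 : ∀ x, x ∈ N2 ↔ T.diag (x,b') (a,b) := by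
    intro x; simp [hN2]
  have hunion : N1 ∪ N2 = univ.filter (fun x => G.Adj a x) := by
    ext x
    simp only [mem_union, hmem1 x, hmem2 x, mem_filter, mem_univ, true_and]
    constructor
    · rintro (h | h)
      · exact (T.diag_adj _ _ _ _ h).1.symm
      · exact (T.diag_adj _ _ _ _ h).1.symm
    · intro h
      rcases T.diag_choice x a b b' h.symm hHa with ⟨h1, _⟩ | ⟨_, h2⟩
      · exact Or.inl h1
      · exact Or.inr h2
  have hdisj : Disjoint N1 N2 := by
    rw [Finset.disjoint_left]
    intro x hy1 hy2
    rw [hmem1] at hy1; rw [hmem2] at hy2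
    rcases T.diag_choice x a b b' (T.diag_adj _ _ _ _ hy1).1 hHa with
      ⟨_, hn⟩ | ⟨hn, _⟩
    · exact hn hy2
    · exact hn hy1
  have hinj1 : ∀ x ∈ N1, ∀ z ∈ N1, ((x,b) : VG × VH) = (z,b) → x = z :=
    fun x _ z _ h => congrArg Prod.fst h
  have hinj2 : ∀ x ∈ N2, ∀ z ∈ N2, ((x,b') : VG × VH) = (z,b') → x = z :=
    fun x _ z _ h => congrArg Prod.fst h
  have hface : univ.filter (fun w => T.IsFace (a,b) (a,b') w)
      = N1.image (fun x => ((x,b) : VG × VH))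
        ∪ N2.image (fun x => ((x,b') : VG × VH)) := by
    ext w
    simp only [mem_filter, mem_univ, true_and, mem_union, mem_image,
      T.isFace_vert a hHa, hmem1, hmem2]
    constructor
    · rintro (⟨x, hd, rfl⟩ | ⟨x, hd, rfl⟩)
      · exact Or.inl ⟨x, hd, rfl⟩
      · exact Or.inr ⟨x, hd, rfl⟩
    · rintro (⟨x, hd, rfl⟩ | ⟨x, hd, rfl⟩)
      · exact Or.inl ⟨x, hd, rfl⟩
      · exact Or.inr ⟨x, hd, rfl⟩
  have himgdisj : Disjoint (N1.image (fun x => ((x,b) : VG × VH)))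
      (N2.image (fun x => ((x,b') : VG × VH))) := by
    rw [Finset.disjoint_left]
    rintro p hp1 hp2
    rw [mem_image] at hp1 hp2
    obtain ⟨x, _, rfl⟩ := hp1
    obtain ⟨z, _, hz⟩ := hp2
    exact hb (congrArg Prod.snd hz).symm
  have havoid1 : univ.filter (fun w => T.IsFaceAvoiding (a,b) (a,b') w (a,b))
      = N1.image (fun x => ((x,b) : VG × VH)) := by
    ext w
    simp only [mem_filter, mem_univ, true_and, mem_image,
      T.isFaceAvoiding_vert_left a hHa, hmem1]
    constructor
    · rintro ⟨x, hd, rfl⟩; exact ⟨x, hd, rfl⟩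
    · rintro ⟨x, hd, rfl⟩; exact ⟨x, hd, rfl⟩
  have havoid2 : univ.filter (fun w => T.IsFaceAvoiding (a,b) (a,b') w (a,b'))
      = N2.image (fun x => ((x,b') : VG × VH)) := by
    ext w
    simp only [mem_filter, mem_univ, true_and, mem_image,
      T.isFaceAvoiding_vert_right a hHa, hmem2]
    constructor
    · rintro ⟨x, hd, rfl⟩; exact ⟨x, hd, rfl⟩
    · rintro ⟨x, hd, rfl⟩; exact ⟨x, hd, rfl⟩
  have halpha1 : T.alpha (a,b) (a,b') (a,b) = (N1.card : ℤ) := by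
    rw [TriProd.alpha, if_pos (Or.inl rfl), if_neg hnd, havoid1,
      Finset.card_image_of_injOn (fun x _ z _ h => congrArg Prod.fst h)]
  have halpha2 : T.alpha (a,b) (a,b') (a,b') = (N2.card : ℤ) := by
    rw [TriProd.alpha, if_pos (Or.inr rfl), if_neg hnd, havoid2,
      Finset.card_image_of_injOn (fun x _ z _ h => congrArg Prod.fst h)]
  have hsum : (∑ x ∈ N1, f x) + (∑ x ∈ N2, f x)
      = ∑ x ∈ univ.filter (fun x => G.Adj a x), f x := by
    rw [← Finset.sum_union hdisj, hunion]
  have hcard : (N1.card : ℤ) + (N2.card : ℤ)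
      = ((univ.filter (fun x => G.Adj a x)).card : ℤ) := by
    rw [← Nat.cast_add, ← Finset.card_union_of_disjoint hdisj, hunion]
  rw [TriProd.Div, hface, Finset.sum_union himgdisj,
    Finset.sum_image hinj1, Finset.sum_image hinj2, halpha1, halpha2]
  simp only [Finset.sum_add_distrib, Finset.sum_const, nsmul_eq_mul]
  rw [← hsum, ← hcard]
  ring

lemma div_diag (T : TriProd G H) (f : VG → ℤ) (g : VH → ℤ) {a a' : VG}
    {b b' : VH} (hd : T.diag (a,b) (a',b')) :
    T.Div (fun p => f p.1 + g p.2) (a,b) (a',b') = 0 := by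
  have ha : a ≠ a' := T.diag_neG hd
  have hface : univ.filter (fun w => T.IsFace (a,b) (a',b') w)
      = {((a',b) : VG × VH), ((a,b') : VG × VH)} := by
    ext w
    simp only [mem_filter, mem_univ, true_and, T.isFace_diag hd,
      mem_insert, mem_singleton]
  have hne : ((a',b) : VG × VH) ≠ (a,b') :=
    fun h => ha (congrArg Prod.fst h).symm
  have h1 : T.alpha (a,b) (a',b') (a,b) = 1 := by
    rw [TriProd.alpha, if_pos (Or.inl rfl), if_pos hd]
  have h2 : T.alpha (a,b) (a',b') (a',b') = 1 := by
    rw [TriProd.alpha, if_pos (Or.inr rfl), if_pos hd]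
  rw [TriProd.Div, hface, Finset.sum_pair hne, h1, h2]
  ring

end TriProd

lemma lap_sum (H : SimpleGraph VH) (g : VH → ℤ) (b : VH) :
    ∑ w, g w * lapCol H w b
      = (∑ y ∈ univ.filter (fun y => H.Adj b y), g y)
        - ((univ.filter (fun y => H.Adj b y)).card : ℤ) * g b := by
  have key : ∀ w ∈ (univ : Finset VH), g w * lapCol H w b
      = (if w ∈ univ.filter (fun y => H.Adj b y) then g w else 0)
        + (if w = b then
            -(((univ.filter (fun y => H.Adj b y)).card : ℤ)) * g b else 0) := by
    intro w _
    by_cases hw : w = b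
    · subst hw
      simp [lapCol, H.irrefl]
      ring
    · rw [lapCol, if_neg (fun h => hw h.symm), if_neg hw]
      by_cases h2 : H.Adj b w <;> simp [h2]
  rw [Finset.sum_congr rfl key, Finset.sum_add_distrib]
  rw [Finset.sum_ite_mem, Finset.univ_inter, Finset.sum_ite_eq' univ b]
  simp
  ring

end Aux3

/-- If `P` is a principal divisor on `G` and `Q` is a principal divisor
on `H`, then `β(P, Q)` is a principal divisor on the triangulated product `Δ`. -/
theorem beta_principal {VG VH : Type*} [Fintype VG] [Fintype VH]
    (G : SimpleGraph VG) (H : SimpleGraph VH)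
    (hG : G.Connected) (hH : H.Connected)
    (hGe : ∃ a a', G.Adj a a') (hHe : ∃ b b', H.Adj b b')
    (T : TriProd G H)
    (P : VG → ℤ) (Q : VH → ℤ)
    (hP : GraphPrincipal G P) (hQ : GraphPrincipal H Q) :
    T.Principal (beta P Q) := by
  obtain ⟨f, hf⟩ := hP
  obtain ⟨g, hg⟩ := hQ
  refine ⟨fun p => f p.1 + g p.2, ?_⟩
  rintro ⟨a, b⟩ ⟨a', b'⟩ (⟨heq, hadj⟩ | ⟨heq, hadj⟩ | hd)
  · dsimp only at heq hadj
    subst heq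
    have hne : a ≠ a' := hadj.ne
    have hb : beta P Q (a,b) (a',b) = Q b := by simp [beta, hne]
    rw [T.div_horiz f g b hadj, hb, hg b, lap_sum H g b]
  · dsimp only at heq hadj
    subst heq
    have hb : beta P Q (a,b) (a,b') = P a := by simp [beta]
    rw [T.div_vert f g a hadj, hb, hf a, lap_sum G f a]
  · have h1 : a ≠ a' := T.diag_neG hd
    have h2 : b ≠ b' := T.diag_neH hd
    have hb : beta P Q (a,b) (a',b') = 0 := by simp [beta, h1, h2]
    rw [T.div_diag f g hd, hb]
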